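/- Let q ≠ 0 and r be real numbers. For every nonnegative integer n, ∑_{k=0}^n W(n,k) ĉ_k^q(−r) = (−1)^n/(n+1). -/

import Mathlib

/-- The falling factorial `(x)_k = x(x-1)⋯(x-k+1)`. -/
noncomputable def fallFac (x : ℝ) (k : ℕ) : ℝ := ∏ i ∈ Finset.range k, (x - i)

/-- The generalized falling factorial `(x|q)_k = x(x-q)⋯(x-(k-1)q)`. -/
noncomputable def genFallFac (q x : ℝ) (k : ℕ) : ℝ := ∏ i ∈ Finset.range k, (x - i * q)

/-- The Cauchy polynomials with a `q` parameter of the second kind: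
`ĉ_n^q(z) = ∫_0^1 (−x + z | q)_n dx`. -/
noncomputable def cauchySecond (q z : ℝ) (n : ℕ) : ℝ := ∫ x in (0:ℝ)..1, genFallFac q (-x + z) n

lemma genFallFac_eq (q : ℝ) (hq : q ≠ 0) (y : ℝ) (k : ℕ) :
    genFallFac q y k = q ^ k * fallFac (y / q) k := by
  unfold genFallFac fallFac
  calc ∏ i ∈ Finset.range k, (y - (i:ℝ) * q)
      = ∏ i ∈ Finset.range k, (q * (y / q - (i:ℝ))) :=
        Finset.prod_congr rfl fun i _ => by field_simp
    _ = q ^ k * ∏ i ∈ Finset.range k, (y / q - (i:ℝ)) := by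
        rw [Finset.prod_mul_distrib, Finset.prod_const, Finset.card_range]

lemma cont_gff (q r : ℝ) (k : ℕ) : Continuous (fun x : ℝ => genFallFac q (-x + -r) k) := by
  unfold genFallFac
  exact continuous_finset_prod _ fun i _ => by fun_prop

/-- `∑_{k=0}^n W(n,k) ĉ_k^q(−r) = (−1)^n/(n+1)`. -/
theorem whitneySecond_mul_cauchySecond_sum (q r : ℝ) (hq : q ≠ 0)
    (W : ℕ → ℕ → ℝ)
    (hW0 : ∀ n k, n < k → W n k = 0)
    (hW : ∀ n : ℕ, ∀ x : ℝ, (q * x + r) ^ n =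
      ∑ k ∈ Finset.range (n + 1), q ^ k * W n k * fallFac x k)
    (n : ℕ) :
    ∑ k ∈ Finset.range (n + 1), W n k * cauchySecond q (-r) k =
      (-1 : ℝ) ^ n / ((n : ℝ) + 1) := by
  have key : ∑ k ∈ Finset.range (n + 1), W n k * cauchySecond q (-r) k
      = ∫ x in (0:ℝ)..1, ∑ k ∈ Finset.range (n + 1),
          W n k * genFallFac q (-x + -r) k := by
    rw [intervalIntegral.integral_finset_sum]
    · refine Finset.sum_congr rfl fun k _ => ?_
      rw [intervalIntegral.integral_const_mul]
      rfl
    · intro k _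
      exact (continuous_const.mul (cont_gff q r k)).intervalIntegrable _ _
  rw [key]
  have hpt : ∀ x : ℝ, ∑ k ∈ Finset.range (n + 1), W n k * genFallFac q (-x + -r) k
      = (-1) ^ n * x ^ n := by
    intro x
    have h1 : ∑ k ∈ Finset.range (n + 1), W n k * genFallFac q (-x + -r) k
        = ∑ k ∈ Finset.range (n + 1), q ^ k * W n k * fallFac ((-x + -r) / q) k := by
      refine Finset.sum_congr rfl fun k _ => ?_
      rw [genFallFac_eq q hq]; ring
    rw [h1, ← hW n ((-x + -r) / q)]
    have : q * ((-x + -r) / q) + r = -x := by field_simp; ring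
    rw [this]
    rw [neg_pow]
  have : (fun x : ℝ => ∑ k ∈ Finset.range (n + 1), W n k * genFallFac q (-x + -r) k)
      = fun x : ℝ => (-1 : ℝ) ^ n * x ^ n := funext hpt
  rw [intervalIntegral.integral_congr (fun x _ => hpt x)]
  rw [intervalIntegral.integral_const_mul, integral_pow]
  simp [div_eq_mul_inv]
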